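/- Let ω = e^{2πi/3} be the third root of unity in the upper half plane 𝔥₁. Then there is no γ ∈ Γ(2) ⊂ SL(2,ℤ) with γ·ω = -conj(ω), where the action is by fractional linear transformations. In other words, ω is not Γ(2)-real. -/

import Mathlib

open Matrix

noncomputable section

/-- ω = e^{2πi/3}. -/
def omega : ℂ := Complex.exp (2 * Real.pi * Complex.I / 3)

lemma omega_eq : omega = Complex.ofReal (-(1/2)) + Complex.ofReal (Real.sqrt 3 / 2) * Complex.I := by
  have h : (2 * Real.pi * Complex.I / 3) = Complex.ofReal (2 * Real.pi / 3) * Complex.I := by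
    push_cast; ring
  rw [omega, h, Complex.exp_mul_I, ← Complex.ofReal_cos, ← Complex.ofReal_sin]
  have h1 : 2 * Real.pi / 3 = Real.pi - Real.pi / 3 := by ring
  rw [h1, Real.cos_pi_sub, Real.sin_pi_sub, Real.cos_pi_div_three, Real.sin_pi_div_three]

lemma omega_re : omega.re = -(1/2) := by rw [omega_eq]; simp
lemma omega_im : omega.im = Real.sqrt 3 / 2 := by rw [omega_eq]; simp

/-- The point ω = e^{2πi/3} of the upper half plane is not Γ(2)-real: no γ ∈ Γ(2)
satisfies γ·ω = -conj(ω). -/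
theorem omega_not_gamma_two_real :
    ¬ ∃ γ : Matrix.SpecialLinearGroup (Fin 2) ℤ,
      (∀ i j, (2 : ℤ) ∣ ((γ : Matrix (Fin 2) (Fin 2) ℤ) - 1) i j) ∧
      (((γ : Matrix (Fin 2) (Fin 2) ℤ) 0 0 : ℂ) * omega + ((γ : Matrix (Fin 2) (Fin 2) ℤ) 0 1 : ℂ)) /
          (((γ : Matrix (Fin 2) (Fin 2) ℤ) 1 0 : ℂ) * omega + ((γ : Matrix (Fin 2) (Fin 2) ℤ) 1 1 : ℂ))
        = -(starRingEnd ℂ) omega := by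
  rintro ⟨γ, hmod, heq⟩
  set a := (γ : Matrix (Fin 2) (Fin 2) ℤ) 0 0 with ha
  set b := (γ : Matrix (Fin 2) (Fin 2) ℤ) 0 1 with hb
  set c := (γ : Matrix (Fin 2) (Fin 2) ℤ) 1 0 with hc
  set d := (γ : Matrix (Fin 2) (Fin 2) ℤ) 1 1 with hd
  clear_value a b c d
  have hs : Real.sqrt 3 > 0 := Real.sqrt_pos.mpr (by norm_num)
  have hs2 : Real.sqrt 3 ^ 2 = 3 := Real.sq_sqrt (by norm_num)
  -- the denominator is nonzero (else det γ = 0)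
  have hden : ((c : ℂ) * omega + (d : ℂ)) ≠ 0 := by
    intro h0
    have him := congrArg Complex.im h0
    have hre := congrArg Complex.re h0
    simp [Complex.add_im, Complex.add_re, Complex.mul_im, Complex.mul_re,
      omega_re, omega_im] at him hre
    have hd0 : (d : ℝ) = 0 := by rw [him] at hre; simpa using hre
    have hd0' : d = 0 := by exact_mod_cast hd0
    have hdet := γ.2
    rw [Matrix.det_fin_two, ← ha, ← hb, ← hc, ← hd, him, hd0'] at hdet
    simp at hdet
  -- clear the division
  have heq2 : ((a : ℂ) * omega + (b : ℂ)) = -(starRingEnd ℂ) omega * ((c : ℂ) * omega + (d : ℂ)) := by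
    rw [div_eq_iff hden] at heq
    linear_combination heq
  have him := congrArg Complex.im heq2
  have hre := congrArg Complex.re heq2
  simp [Complex.add_im, Complex.add_re, Complex.mul_im, Complex.mul_re, Complex.neg_im,
    Complex.neg_re, Complex.conj_im, Complex.conj_re, omega_re, omega_im] at him hre
  -- from the imaginary part: a = d
  have h : (a : ℝ) * Real.sqrt 3 = d * Real.sqrt 3 := by linear_combination 2 * him
  have had : (a : ℝ) = d := mul_right_cancel₀ hs.ne' h
  -- from the real part: b = a - c
  have hbac : (b : ℝ) = a - c := by
    linear_combination hre - ((c : ℝ)/4) * hs2 - (1/2 : ℝ) * had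
  have had' : a = d := by exact_mod_cast had
  have hbac' : b = a - c := by exact_mod_cast hbac
  -- parity contradiction: b is even, but b = a - c = d - c is odd
  have h1 := hmod 0 1
  have h2 := hmod 1 0
  have h3 := hmod 1 1
  simp [Matrix.sub_apply, Matrix.one_apply, ← ha, ← hb, ← hc, ← hd] at h1 h2 h3
  omega
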